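/- If S and S' are finite commutative unital semigroups, then D(S × S') ≥ D(S) + D(S') − 1, where D denotes the Davenport constant. -/

import Mathlib

/-- A list (sequence) in a commutative monoid is reducible if a proper
subsequence has the same product. -/
def Reducible {M : Type*} [CommMonoid M] (A : List M) : Prop :=
  ∃ B : List M, List.Sublist B A ∧ B.length < A.length ∧ B.prod = A.prod

/-- The Davenport constant: the least positive `n` such that every sequence of
length `n` is reducible (`⊤` if none exists). -/
noncomputable def davenport (M : Type*) [CommMonoid M] : ℕ∞ :=
  sInf {k : ℕ∞ | ∃ n : ℕ, k = n ∧ 0 < n ∧ ∀ A : List M, A.length = n → Reducible A}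

/-- An ideal of a commutative monoid. -/
def IsMulIdeal {M : Type*} [CommMonoid M] (T : Set M) : Prop :=
  ∀ s t : M, t ∈ T → s * t ∈ T

/-- The relative Davenport constant `D(S, T)`: the least positive `n` such
that every sequence of length `n` with product in `T` is reducible. -/
noncomputable def davenportRel (M : Type*) [CommMonoid M] (T : Set M) : ℕ∞ :=
  sInf {k : ℕ∞ | ∃ n : ℕ, k = n ∧ 0 < n ∧
    ∀ A : List M, A.length = n → A.prod ∈ T → Reducible A}

/-- `(S, T)` is a unit-stabilized pair. -/
def UnitStabilizedPair (M : Type*) [CommMonoid M] (T : Set M) : Prop :=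
  ∀ a b : M, a * b ∉ T →
    {u : Mˣ | (u : M) * a = a} = {u : Mˣ | (u : M) * (a * b) = a * b} →
    ∃ u : Mˣ, a * b = a * u

section Aux
variable {M : Type*} [CommMonoid M]
attribute [local instance] Classical.propDecidable

def AllRed (M : Type*) [CommMonoid M] (n : ℕ) : Prop :=
  ∀ A : List M, A.length = n → Reducible A

lemma allRed_succ {n : ℕ} (h : AllRed M n) : AllRed M (n + 1) := by
  intro A hA
  rcases A.eq_nil_or_concat with rfl | ⟨L, a, rfl⟩
  · simp at hA
  · simp at hA
    obtain ⟨B, hsub, hlen, hprod⟩ := h L hA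
    rw [List.concat_eq_append]
    exact ⟨B ++ [a], hsub.append (List.Sublist.refl _), by simpa [hA] using hlen,
      by simp [hprod]⟩

lemma allRed_mono {n m : ℕ} (hnm : n ≤ m) (h : AllRed M n) : AllRed M m := by
  induction m, hnm using Nat.le_induction with
  | base => exact h
  | succ m _ ih => exact allRed_succ ih

lemma exists_allRed [Finite M] : ∃ n, 0 < n ∧ AllRed M n := by
  have := Fintype.ofFinite M
  refine ⟨Fintype.card M, Fintype.card_pos, ?_⟩
  intro A hA
  set n := Fintype.card M with hn
  obtain ⟨i, j, hij, heq⟩ := Fintype.exists_ne_map_eq_of_card_lt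
    (fun i : Fin (n + 1) => (A.take i).prod) (by simp; omega)
  wlog hlt : (i : ℕ) < (j : ℕ) generalizing i j
  · exact this j i hij.symm heq.symm (by omega)
  refine ⟨A.take i ++ A.drop j, ?_, ?_, ?_⟩
  · have h1 : List.Sublist (A.drop (j : ℕ)) (A.drop (i : ℕ)) := by
      have hji : (j : ℕ) = ((j : ℕ) - (i : ℕ)) + (i : ℕ) := by omega
      rw [hji, ← List.drop_drop]
      exact List.Sublist.drop (List.drop_sublist _ _) _
    have h2 : List.Sublist (A.take (i:ℕ) ++ A.drop (j:ℕ)) (A.take (i:ℕ) ++ A.drop (i:ℕ)) :=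
      (List.Sublist.refl _).append h1
    rwa [List.take_append_drop] at h2
  · have hi : (i : ℕ) ≤ n := by omega
    have hj : (j : ℕ) ≤ n := by omega
    simp [hA]
    omega
  · have : A.prod = (A.take (j:ℕ)).prod * (A.drop (j:ℕ)).prod := by
      rw [← List.prod_append, List.take_append_drop]
    rw [List.prod_append, heq, ← this]

lemma davenport_eq [Finite M] :
    davenport M = (Nat.find (exists_allRed (M := M)) : ℕ∞) := by
  apply le_antisymm
  · apply sInf_le
    refine Set.mem_setOf.mpr ⟨Nat.find (exists_allRed (M := M)), rfl,
      (Nat.find_spec (exists_allRed (M := M))).1, (Nat.find_spec (exists_allRed (M := M))).2⟩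
  · apply le_sInf
    rintro k ⟨n, rfl, hn, hall⟩
    exact_mod_cast Nat.find_min' (exists_allRed (M := M)) ⟨hn, hall⟩

lemma not_reducible_nil : ¬ Reducible ([] : List M) := by
  rintro ⟨B, hsub, hlen, -⟩
  simp at hlen

lemma exists_irreducible [Finite M] :
    ∃ A : List M, A.length = Nat.find (exists_allRed (M := M)) - 1 ∧ ¬ Reducible A := by
  set d := Nat.find (exists_allRed (M := M)) with hd
  have hdpos : 0 < d := (Nat.find_spec (exists_allRed (M := M))).1
  rcases Nat.eq_or_lt_of_le hdpos with h1 | h1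
  · exact ⟨[], by simp; omega, not_reducible_nil⟩
  · have := Nat.find_min (exists_allRed (M := M)) (show d - 1 < d by omega)
    rw [not_and] at this
    have h2 := this (by omega)
    unfold AllRed at h2
    push_neg at h2
    obtain ⟨A, hA, hA2⟩ := h2
    exact ⟨A, hA, hA2⟩

lemma davenport_ge_of_irreducible [Finite M] {A : List M} (hA : ¬ Reducible A) :
    ((A.length + 1 : ℕ) : ℕ∞) ≤ davenport M := by
  apply le_sInf
  rintro k ⟨n, rfl, hn, hall⟩
  have : A.length + 1 ≤ n := by
    by_contra hc
    exact hA (allRed_mono (by omega) hall A rfl)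
  exact_mod_cast this

end Aux

section Prod
variable {S S' : Type*} [CommMonoid S] [CommMonoid S']

lemma prod_map_inl (l : List S) :
    (l.map fun a => ((a, 1) : S × S')).prod = (l.prod, 1) := by
  induction l with
  | nil => simp; rfl
  | cons a l ih => simp [ih, Prod.ext_iff]

lemma prod_map_inr (l : List S') :
    (l.map fun a => ((1, a) : S × S')).prod = (1, l.prod) := by
  induction l with
  | nil => simp; rfl
  | cons a l ih => simp [ih, Prod.ext_iff]

lemma not_reducible_append {A : List S} {A' : List S'}
    (hA : ¬ Reducible A) (hA' : ¬ Reducible A') :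
    ¬ Reducible ((A.map fun a => ((a, 1) : S × S')) ++ (A'.map fun a => ((1, a) : S × S'))) := by
  rintro ⟨B, hsub, hlen, hprod⟩
  rw [List.sublist_append_iff] at hsub
  obtain ⟨B1, B2, rfl, h1, h2⟩ := hsub
  rw [List.sublist_map_iff] at h1 h2
  obtain ⟨A1, hA1, rfl⟩ := h1
  obtain ⟨A2, hA2, rfl⟩ := h2
  rw [List.prod_append, List.prod_append, prod_map_inl, prod_map_inr,
    prod_map_inl, prod_map_inr, Prod.ext_iff] at hprod
  simp only [Prod.fst_mul, Prod.snd_mul, mul_one, one_mul] at hprod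
  simp only [List.length_append, List.length_map] at hlen
  have l1 := hA1.length_le
  have l2 := hA2.length_le
  rcases lt_or_ge A1.length A.length with h | h
  · exact hA ⟨A1, hA1, h, hprod.1⟩
  · exact hA' ⟨A2, hA2, by omega, hprod.2⟩

end Prod

attribute [local instance] Classical.propDecidable in
theorem davenport_prod_ge {S S' : Type*} [CommMonoid S] [CommMonoid S']
    [Finite S] [Finite S'] :
    davenport (S × S') ≥ davenport S + davenport S' - 1 := by
  set d := Nat.find (exists_allRed (M := S)) with hd
  set d' := Nat.find (exists_allRed (M := S')) with hd'
  have hdpos : 0 < d := (Nat.find_spec (exists_allRed (M := S))).1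
  have hd'pos : 0 < d' := (Nat.find_spec (exists_allRed (M := S'))).1
  obtain ⟨A, hAlen, hAirr⟩ := exists_irreducible (M := S)
  obtain ⟨A', hA'len, hA'irr⟩ := exists_irreducible (M := S')
  have key := davenport_ge_of_irreducible (not_reducible_append hAirr hA'irr)
  have hlen : ((A.map fun a => ((a, 1) : S × S')) ++
      (A'.map fun a => ((1, a) : S × S'))).length = (d - 1) + (d' - 1) := by
    simp [hAlen, hA'len, hd, hd']
  rw [hlen] at key
  rw [davenport_eq (M := S), davenport_eq (M := S'), ← hd, ← hd']
  calc (d : ℕ∞) + d' - 1 = ((d + d' - 1 : ℕ) : ℕ∞) := by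
        rw [ENat.coe_sub, Nat.cast_add, Nat.cast_one]
    _ = (((d - 1) + (d' - 1) + 1 : ℕ) : ℕ∞) := by congr 1; omega
    _ ≤ davenport (S × S') := key
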